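/- (Lambert's Theorem) Let three tangent lines to the parabola y = x²/(4s) (s ≠ 0), at points with distinct x-coordinates a, b, c, pairwise intersect to form a triangle. Then the focus F = (0, s) lies on the circumcircle of this triangle. -/

import Mathlib

open EuclideanGeometry

lemma tangent_inter_coords (s u v : ℝ) (hs : s ≠ 0) (huv : u ≠ v) (x y : ℝ)
    (h1 : y = (u / (2 * s)) * x - u ^ 2 / (4 * s))
    (h2 : y = (v / (2 * s)) * x - v ^ 2 / (4 * s)) :
    x = (u + v) / 2 ∧ y = u * v / (4 * s) := by
  have h := h1.symm.trans h2
  have huv' : u - v ≠ 0 := sub_ne_zero.mpr huv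
  have hx : x = (u + v) / 2 := by
    field_simp at h
    have h2s : (2 * s) * ((u - v) * (2 * x - (u + v))) = 0 := by linear_combination s * h
    have : (u - v) * (2 * x - (u + v)) = 0 := by
      rcases mul_eq_zero.mp h2s with h' | h'
      · exact absurd h' (by simpa using hs)
      · exact h'
    rcases mul_eq_zero.mp this with h' | h'
    · exact absurd h' huv'
    · linarith
  refine ⟨hx, ?_⟩
  rw [h1, hx]; field_simp; ring

/-- Lambert's Theorem: Let `P`, `Q`, `R` be the pairwise intersection points
of the tangent lines to the parabola `y = x²/(4s)` (`s ≠ 0`) at parameters `a`, `b`, `c`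
(pairwise distinct), where the tangent at parameter `a` is `y = (a/(2s)) x - a²/(4s)`.
Then the focus `F = (0, s)` lies on the circumcircle of the triangle `PQR`, i.e. the four
points `P`, `Q`, `R`, `F` are concyclic. -/
theorem stmt_19 (s a b c : ℝ) (hs : s ≠ 0)
    (hab : a ≠ b) (hac : a ≠ c) (hbc : b ≠ c)
    (P Q R F : EuclideanSpace ℝ (Fin 2))
    -- `P` is the intersection of the tangents at `a` and `b`:
    (hPa : P 1 = (a / (2 * s)) * P 0 - a ^ 2 / (4 * s))
    (hPb : P 1 = (b / (2 * s)) * P 0 - b ^ 2 / (4 * s))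
    -- `Q` is the intersection of the tangents at `b` and `c`:
    (hQb : Q 1 = (b / (2 * s)) * Q 0 - b ^ 2 / (4 * s))
    (hQc : Q 1 = (c / (2 * s)) * Q 0 - c ^ 2 / (4 * s))
    -- `R` is the intersection of the tangents at `a` and `c`:
    (hRa : R 1 = (a / (2 * s)) * R 0 - a ^ 2 / (4 * s))
    (hRc : R 1 = (c / (2 * s)) * R 0 - c ^ 2 / (4 * s))
    -- `F` is the focus `(0, s)`:
    (hF0 : F 0 = 0) (hF1 : F 1 = s) :
    Cospherical ({P, Q, R, F} : Set (EuclideanSpace ℝ (Fin 2))) := by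
  obtain ⟨hP0, hP1⟩ := tangent_inter_coords s a b hs hab _ _ hPa hPb
  obtain ⟨hQ0, hQ1⟩ := tangent_inter_coords s b c hs hbc _ _ hQb hQc
  obtain ⟨hR0, hR1⟩ := tangent_inter_coords s a c hs hac _ _ hRa hRc
  set x0 : ℝ := (a + b + c) / 4 - a * b * c / (16 * s ^ 2) with hx0
  set y0 : ℝ := s / 2 + (a * b + b * c + a * c) / (8 * s) with hy0
  set O : EuclideanSpace ℝ (Fin 2) := (WithLp.equiv 2 (Fin 2 → ℝ)).symm ![x0, y0] with hO
  have hO0 : O 0 = x0 := rfl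
  have hO1 : O 1 = y0 := rfl
  refine ⟨O, Real.sqrt (x0 ^ 2 + (s - y0) ^ 2), ?_⟩
  intro p hp
  have key : ∀ q : EuclideanSpace ℝ (Fin 2),
      (q 0 - x0) ^ 2 + (q 1 - y0) ^ 2 = x0 ^ 2 + (s - y0) ^ 2 →
      dist q O = Real.sqrt (x0 ^ 2 + (s - y0) ^ 2) := by
    intro q hq
    rw [EuclideanSpace.dist_eq]
    congr 1
    rw [Fin.sum_univ_two, Real.dist_eq, Real.dist_eq, sq_abs, sq_abs, hO0, hO1]
    exact hq
  simp only [Set.mem_insert_iff, Set.mem_singleton_iff] at hp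
  rcases hp with rfl | rfl | rfl | rfl
  · exact key p (by rw [hP0, hP1, hx0, hy0]; field_simp; ring)
  · exact key p (by rw [hQ0, hQ1, hx0, hy0]; field_simp; ring)
  · exact key p (by rw [hR0, hR1, hx0, hy0]; field_simp; ring)
  · exact key p (by rw [hF0, hF1]; ring)
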